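/- Let (Ω, F, P) be a probability space, M > 0, and let Ȳ : Ω → ℝ be measurable with 0 ≤ Ȳ ≤ M pointwise and ∫ Ȳ dP > 1. Let U : Ω → ℝ be uniformly distributed on [0,1] and independent of σ(Ȳ). Then there exist a ∈ (0,1) and δ ∈ (0,1) such that, setting α̃ := a·(1 − δ·Ȳ/M) and A := {U ≤ α̃·Ȳ}, the following hold: (i) 0 < a(1−δ) ≤ α̃ ≤ a pointwise; (ii) α̃·Ȳ ≤ 1 pointwise; (iii) P(A) > a; (iv) the conditional expectation E[(1/α̃)·1_A | σ(Ȳ)] equals Ȳ almost surely. -/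

import Mathlib

open MeasureTheory ProbabilityTheory

/-- Integral of the indicator of `Iic t` against the uniform law on `[0,1]` is `t`. -/
lemma unif_indicator_integral {t : ℝ} (ht0 : 0 ≤ t) (ht1 : t ≤ 1) :
    ∫ u, (Set.Iic t).indicator (fun _ => (1 : ℝ)) u
      ∂(volume.restrict (Set.Icc (0 : ℝ) 1)) = t := by
  have h1 : ∫ u, (Set.Iic t).indicator (fun _ => (1 : ℝ)) u
      ∂(volume.restrict (Set.Icc (0 : ℝ) 1))
      = ((volume.restrict (Set.Icc (0 : ℝ) 1)) (Set.Iic t)).toReal :=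
    integral_indicator_one measurableSet_Iic
  rw [h1, Measure.restrict_apply measurableSet_Iic]
  have h : Set.Iic t ∩ Set.Icc (0 : ℝ) 1 = Set.Icc 0 t := by
    ext x
    simp only [Set.mem_inter_iff, Set.mem_Iic, Set.mem_Icc]
    constructor
    · rintro ⟨h1, h2, _⟩; exact ⟨h2, h1⟩
    · rintro ⟨h1, h2⟩; exact ⟨h2, h1, h2.trans ht1⟩
  rw [h, Real.volume_Icc, ENNReal.toReal_ofReal (by linarith), sub_zero]

/-- The key computation: for a measurable weight `w` (a.e. bounded) and a measurable
`g` taking a.e. values in `[0,1]`, with `U` uniform and `(Y,U)` having product law,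
`∫ w(Y) · 1{U ≤ g(Y)} dP = ∫ w·g d(law of Y)`. -/
lemma key_integral {Ω : Type*} [MeasurableSpace Ω] (P : Measure Ω) [IsProbabilityMeasure P]
    (Y U : Ω → ℝ) (hYmeas : Measurable Y) (hU : Measurable U)
    (hUlaw : P.map U = volume.restrict (Set.Icc (0 : ℝ) 1))
    (hmap : P.map (fun ω => (Y ω, U ω)) = (P.map Y).prod (P.map U))
    (g w : ℝ → ℝ) (hg : Measurable g) (hw : Measurable w) (C : ℝ)
    (hg01 : ∀ᵐ y ∂(P.map Y), g y ∈ Set.Icc (0 : ℝ) 1)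
    (hwC : ∀ᵐ y ∂(P.map Y), |w y| ≤ C) :
    ∫ ω, w (Y ω) * (Set.Iic (g (Y ω))).indicator (fun _ => (1 : ℝ)) (U ω) ∂P
      = ∫ y, w y * g y ∂(P.map Y) := by
  have hμU : IsProbabilityMeasure (P.map U) := Measure.isProbabilityMeasure_map hU.aemeasurable
  have hμY : IsProbabilityMeasure (P.map Y) := Measure.isProbabilityMeasure_map hYmeas.aemeasurable
  have hS : MeasurableSet {p : ℝ × ℝ | p.2 ≤ g p.1} :=
    measurableSet_le measurable_snd (hg.comp measurable_fst)
  set H : ℝ × ℝ → ℝ :=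
    fun p => w p.1 * ({p : ℝ × ℝ | p.2 ≤ g p.1}).indicator (fun _ => (1 : ℝ)) p with hHdef
  have hHmeas : Measurable H :=
    (hw.comp measurable_fst).mul (measurable_const.indicator hS)
  -- a.e. bound on the product
  have hwae : ∀ᵐ p ∂((P.map Y).prod (P.map U)), |w p.1| ≤ C := by
    rw [ae_iff] at hwC ⊢
    have hsub : {p : ℝ × ℝ | ¬ |w p.1| ≤ C} ⊆ {y : ℝ | ¬ |w y| ≤ C} ×ˢ Set.univ := by
      intro p hp; exact ⟨hp, trivial⟩
    refine measure_mono_null hsub ?_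
    rw [Measure.prod_prod, hwC, zero_mul]
  have hHint : Integrable H ((P.map Y).prod (P.map U)) := by
    refine Integrable.mono' (integrable_const C) hHmeas.aestronglyMeasurable ?_
    filter_upwards [hwae] with p hp
    have hind : |({p : ℝ × ℝ | p.2 ≤ g p.1}).indicator (fun _ => (1 : ℝ)) p| ≤ 1 := by
      rw [Set.indicator_apply]; split_ifs <;> simp
    have h0C : 0 ≤ C := (abs_nonneg _).trans hp
    have hH : ‖H p‖ = |w p.1| * |({p : ℝ × ℝ | p.2 ≤ g p.1}).indicator (fun _ => (1 : ℝ)) p| := by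
      simp only [hHdef, Real.norm_eq_abs]
      exact abs_mul _ _
    rw [hH]
    calc |w p.1| * |({p : ℝ × ℝ | p.2 ≤ g p.1}).indicator (fun _ => (1 : ℝ)) p|
        ≤ C * 1 := mul_le_mul hp hind (abs_nonneg _) h0C
      _ = C := mul_one C
  have hpair : AEMeasurable (fun ω => (Y ω, U ω)) P := (hYmeas.prodMk hU).aemeasurable
  have hHsm : AEStronglyMeasurable H (P.map (fun ω => (Y ω, U ω))) := by
    rw [hmap]; exact hHmeas.aestronglyMeasurable
  have h1 : ∫ p, H p ∂((P.map Y).prod (P.map U)) = ∫ ω, H (Y ω, U ω) ∂P := by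
    rw [← hmap]; exact integral_map hpair hHsm
  have h1fun : ∀ ω, w (Y ω) * (Set.Iic (g (Y ω))).indicator (fun _ => (1 : ℝ)) (U ω)
      = H (Y ω, U ω) := by
    intro ω
    show _ = w (Y ω) * ({p : ℝ × ℝ | p.2 ≤ g p.1}).indicator (fun _ => (1 : ℝ)) (Y ω, U ω)
    congr 1
  have h2 : ∫ ω, w (Y ω) * (Set.Iic (g (Y ω))).indicator (fun _ => (1 : ℝ)) (U ω) ∂P
      = ∫ ω, H (Y ω, U ω) ∂P :=
    integral_congr_ae (Filter.Eventually.of_forall h1fun)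
  rw [h2, ← h1, integral_prod _ hHint]
  refine integral_congr_ae ?_
  filter_upwards [hg01] with y hy
  have hfun : ∀ u, H (y, u) = w y * (Set.Iic (g y)).indicator (fun _ => (1 : ℝ)) u := by
    intro u
    show w y * ({p : ℝ × ℝ | p.2 ≤ g p.1}).indicator (fun _ => (1 : ℝ)) (y, u) = _
    congr 1
  calc ∫ u, H (y, u) ∂(P.map U)
      = ∫ u, w y * (Set.Iic (g y)).indicator (fun _ => (1 : ℝ)) u ∂(P.map U) :=
        integral_congr_ae (Filter.Eventually.of_forall hfun)
    _ = w y * ∫ u, (Set.Iic (g y)).indicator (fun _ => (1 : ℝ)) u ∂(P.map U) :=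
        integral_const_mul _ _
    _ = w y * g y := by rw [hUlaw, unif_indicator_integral hy.1 hy.2]

/-- Part 2 of the replication lemma (Lemma 1): a bounded nonnegative random variable `Y`
with expectation strictly above 1 can be replicated as the conditional expected loss of a
test at a data-dependent level `α̃ = a(1 − δY/M) ≤ a`, in a way that the rejection
probability exceeds `a`. -/
theorem stmt_4 {Ω : Type*} [MeasurableSpace Ω] (P : Measure Ω) [IsProbabilityMeasure P]
    (M : ℝ) (hM : 0 < M)
    (Y : Ω → ℝ) (hYmeas : Measurable Y) (hY0 : ∀ ω, 0 ≤ Y ω) (hYM : ∀ ω, Y ω ≤ M)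
    (hYint : 1 < ∫ ω, Y ω ∂P)
    (U : Ω → ℝ) (hU : Measurable U)
    (hUlaw : P.map U = volume.restrict (Set.Icc (0 : ℝ) 1))
    (hindep : Indep (MeasurableSpace.comap U inferInstance)
      (MeasurableSpace.comap Y inferInstance) P) :
    ∃ a ∈ Set.Ioo (0 : ℝ) 1, ∃ δ ∈ Set.Ioo (0 : ℝ) 1,
      -- (i) `0 < a(1−δ) ≤ α̃ ≤ a` pointwise
      0 < a * (1 - δ) ∧
      (∀ ω, a * (1 - δ) ≤ a * (1 - δ * Y ω / M) ∧ a * (1 - δ * Y ω / M) ≤ a) ∧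
      -- (ii) `α̃ · Y ≤ 1` pointwise
      (∀ ω, a * (1 - δ * Y ω / M) * Y ω ≤ 1) ∧
      -- (iii) `P(A) > a` where `A = {U ≤ α̃ Y}`
      ENNReal.ofReal a < P {ω | U ω ≤ a * (1 - δ * Y ω / M) * Y ω} ∧
      -- (iv) `E[(1/α̃)·1_A | σ(Y)] = Y` a.s.
      P[fun ω => (a * (1 - δ * Y ω / M))⁻¹ *
            ({ω' | U ω' ≤ a * (1 - δ * Y ω' / M) * Y ω'}).indicator (fun _ => (1 : ℝ)) ω
          | MeasurableSpace.comap Y inferInstance] =ᵐ[P] Y := by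
  classical
  set EY := ∫ ω, Y ω ∂P with hEYdef
  have hEY1 : 1 < EY := hYint
  have hEYpos : (0 : ℝ) < EY := by linarith
  set δ : ℝ := (EY - 1) / (2 * EY) with hδdef
  have hδ0 : 0 < δ := div_pos (by linarith) (by positivity)
  have hδhalf : δ < 1 / 2 := by
    rw [hδdef, div_lt_iff₀ (by positivity)]; nlinarith
  have hδ1 : δ < 1 := by linarith
  have h1δEY : 1 < (1 - δ) * EY := by
    have h : (1 - δ) * EY = (EY + 1) / 2 := by
      rw [hδdef]; field_simp; ring
    rw [h]; linarith
  set a : ℝ := min (1 / 2) (1 / M) with hadef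
  have ha0 : 0 < a := lt_min (by norm_num) (by positivity)
  have ha1 : a < 1 := lt_of_le_of_lt (min_le_left _ _) (by norm_num)
  have haM : a * M ≤ 1 := by
    have h := min_le_right (1 / 2) (1 / M)
    calc a * M ≤ (1 / M) * M := by nlinarith
      _ = 1 := by field_simp
  -- pointwise facts
  have hαlow : ∀ y, 0 ≤ y → y ≤ M → a * (1 - δ) ≤ a * (1 - δ * y / M) := by
    intro y hy0 hyM
    have h : δ * y / M ≤ δ := by
      rw [div_le_iff₀ hM]; nlinarith
    nlinarith
  have hαhigh : ∀ y, 0 ≤ y → a * (1 - δ * y / M) ≤ a := by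
    intro y hy0
    have h : 0 ≤ δ * y / M := by positivity
    nlinarith
  have hαpos : 0 < a * (1 - δ) := by nlinarith
  have hg0 : ∀ y, 0 ≤ y → y ≤ M → 0 ≤ a * (1 - δ * y / M) * y := by
    intro y hy0 hyM
    have h := hαlow y hy0 hyM
    nlinarith
  have hg1 : ∀ y, 0 ≤ y → y ≤ M → a * (1 - δ * y / M) * y ≤ 1 := by
    intro y hy0 hyM
    have h1 := hαhigh y hy0
    have h2 := hαlow y hy0 hyM
    nlinarith
  have hglow : ∀ y, 0 ≤ y → y ≤ M → a * (1 - δ) * y ≤ a * (1 - δ * y / M) * y := by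
    intro y hy0 hyM
    have h := hαlow y hy0 hyM
    nlinarith
  -- measure-theoretic setup
  have hIF : IndepFun Y U P := (show IndepFun U Y P from hindep).symm
  have hmap : P.map (fun ω => (Y ω, U ω)) = (P.map Y).prod (P.map U) :=
    (indepFun_iff_map_prod_eq_prod_map_map hYmeas.aemeasurable hU.aemeasurable).mp hIF
  have hμY : IsProbabilityMeasure (P.map Y) := Measure.isProbabilityMeasure_map hYmeas.aemeasurable
  have hYae : ∀ᵐ y ∂(P.map Y), y ∈ Set.Icc (0 : ℝ) M :=
    (ae_map_iff hYmeas.aemeasurable measurableSet_Icc).mpr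
      (Filter.Eventually.of_forall fun ω => ⟨hY0 ω, hYM ω⟩)
  set g : ℝ → ℝ := fun y => a * (1 - δ * y / M) * y with hgdef
  have hgmeas : Measurable g :=
    (measurable_const.mul ((measurable_const.sub
      ((measurable_const.mul measurable_id).div_const M)))).mul measurable_id
  have hg01 : ∀ᵐ y ∂(P.map Y), g y ∈ Set.Icc (0 : ℝ) 1 := by
    filter_upwards [hYae] with y hy
    exact ⟨hg0 y hy.1 hy.2, hg1 y hy.1 hy.2⟩
  have hidint : Integrable (fun y => y) (P.map Y) := by
    refine Integrable.mono' (integrable_const M) aestronglyMeasurable_id ?_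
    filter_upwards [hYae] with y hy
    rw [Real.norm_eq_abs, abs_of_nonneg hy.1]; exact hy.2
  have hEYmap : ∫ y, y ∂(P.map Y) = EY :=
    integral_map hYmeas.aemeasurable aestronglyMeasurable_id
  refine ⟨a, ⟨ha0, ha1⟩, δ, ⟨hδ0, hδ1⟩, hαpos,
    fun ω => ⟨hαlow _ (hY0 ω) (hYM ω), hαhigh _ (hY0 ω)⟩,
    fun ω => hg1 _ (hY0 ω) (hYM ω), ?_, ?_⟩
  · -- (iii)
    set A : Set Ω := {ω | U ω ≤ a * (1 - δ * Y ω / M) * Y ω} with hAdef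
    have hA : MeasurableSet A := measurableSet_le hU (hgmeas.comp hYmeas)
    have hPA : (P A).toReal = ∫ y, (1 : ℝ) * g y ∂(P.map Y) := by
      rw [← key_integral P Y U hYmeas hU hUlaw hmap g (fun _ => (1 : ℝ)) hgmeas
        measurable_const 1 hg01 (Filter.Eventually.of_forall fun _ => by norm_num)]
      have hfun : ∀ ω, A.indicator (fun _ => (1 : ℝ)) ω
          = (1 : ℝ) * (Set.Iic (g (Y ω))).indicator (fun _ => (1 : ℝ)) (U ω) := by
        intro ω
        rw [one_mul]
        by_cases h : U ω ≤ g (Y ω)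
        · rw [Set.indicator_of_mem (show ω ∈ A from h),
            Set.indicator_of_mem (Set.mem_Iic.mpr h)]
        · rw [Set.indicator_of_notMem (show ω ∉ A from h),
            Set.indicator_of_notMem (fun hc => h (Set.mem_Iic.mp hc))]
      rw [← measureReal_def, ← integral_indicator_one hA]
      exact integral_congr_ae (Filter.Eventually.of_forall hfun)
    have hgint : Integrable g (P.map Y) := by
      refine Integrable.mono' (integrable_const 1) hgmeas.aestronglyMeasurable ?_
      filter_upwards [hg01] with y hy
      rw [Real.norm_eq_abs, abs_of_nonneg hy.1]; exact hy.2
    have hlow : a * (1 - δ) * EY ≤ ∫ y, (1 : ℝ) * g y ∂(P.map Y) := by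
      have hint2 : Integrable (fun y => a * (1 - δ) * y) (P.map Y) := hidint.const_mul _
      have hmono : ∫ y, a * (1 - δ) * y ∂(P.map Y) ≤ ∫ y, (1 : ℝ) * g y ∂(P.map Y) := by
        refine integral_mono_ae hint2 (by simpa using hgint) ?_
        filter_upwards [hYae] with y hy
        simpa using hglow y hy.1 hy.2
      calc a * (1 - δ) * EY = ∫ y, a * (1 - δ) * y ∂(P.map Y) := by
            rw [integral_const_mul, hEYmap]
        _ ≤ _ := hmono
    have haEY : a < a * (1 - δ) * EY := by nlinarith
    rw [ENNReal.ofReal_lt_iff_lt_toReal ha0.le (measure_ne_top P _)]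
    calc a < a * (1 - δ) * EY := haEY
      _ ≤ ∫ y, (1 : ℝ) * g y ∂(P.map Y) := hlow
      _ = (P A).toReal := hPA.symm
  · -- (iv)
    have hm : MeasurableSpace.comap Y inferInstance ≤ (inferInstance : MeasurableSpace Ω) :=
      hYmeas.comap_le
    set A : Set Ω := {ω' | U ω' ≤ a * (1 - δ * Y ω' / M) * Y ω'} with hAdef
    have hA : MeasurableSet A := measurableSet_le hU (hgmeas.comp hYmeas)
    set α : ℝ → ℝ := fun y => a * (1 - δ * y / M) with hαdef
    have hαmeas : Measurable α :=
      measurable_const.mul ((measurable_const.sub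
        ((measurable_const.mul measurable_id).div_const M)))
    set f : Ω → ℝ := fun ω => (a * (1 - δ * Y ω / M))⁻¹ *
      A.indicator (fun _ => (1 : ℝ)) ω with hfdef
    have hαposy : ∀ y, 0 ≤ y → y ≤ M → 0 < α y := fun y hy0 hyM =>
      lt_of_lt_of_le hαpos (hαlow y hy0 hyM)
    set C : ℝ := (a * (1 - δ))⁻¹ with hCdef
    have hCpos : 0 < C := by positivity
    have hinvle : ∀ y, 0 ≤ y → y ≤ M → (α y)⁻¹ ≤ C := by
      intro y hy0 hyM
      exact inv_anti₀ hαpos (hαlow y hy0 hyM)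
    have hfmeas : Measurable f :=
      ((hαmeas.comp hYmeas).inv).mul (measurable_const.indicator hA)
    have hfint : Integrable f P := by
      refine Integrable.mono' (integrable_const C) hfmeas.aestronglyMeasurable ?_
      refine Filter.Eventually.of_forall fun ω => ?_
      have h1 : (α (Y ω))⁻¹ ≤ C := hinvle _ (hY0 ω) (hYM ω)
      have h2 : 0 < (α (Y ω))⁻¹ := inv_pos.mpr (hαposy _ (hY0 ω) (hYM ω))
      have hind : |A.indicator (fun _ => (1 : ℝ)) ω| ≤ 1 := by
        rw [Set.indicator_apply]; split_ifs <;> simp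
      have hH : ‖f ω‖ = |(α (Y ω))⁻¹| * |A.indicator (fun _ => (1 : ℝ)) ω| := by
        rw [Real.norm_eq_abs]
        exact abs_mul _ _
      rw [hH]
      calc |(α (Y ω))⁻¹| * |A.indicator (fun _ => (1 : ℝ)) ω|
          ≤ C * 1 := mul_le_mul (by rwa [abs_of_pos h2]) hind (abs_nonneg _) hCpos.le
        _ = C := mul_one C
    have hYint' : Integrable Y P := by
      refine Integrable.mono' (integrable_const M) hYmeas.aestronglyMeasurable ?_
      exact Filter.Eventually.of_forall fun ω => by
        rw [Real.norm_eq_abs, abs_of_nonneg (hY0 ω)]; exact hYM ω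
    have hYsm : AEStronglyMeasurable[MeasurableSpace.comap Y inferInstance] Y P := by
      have h : Measurable[MeasurableSpace.comap Y inferInstance] Y := fun s hs =>
        ⟨s, hs, rfl⟩
      exact h.stronglyMeasurable.aestronglyMeasurable
    have hkey : ∀ s, MeasurableSet[MeasurableSpace.comap Y inferInstance] s → P s < ⊤ →
        ∫ ω in s, Y ω ∂P = ∫ ω in s, f ω ∂P := by
      rintro s ⟨B, hB, rfl⟩ -
      set w : ℝ → ℝ := fun y => B.indicator (fun _ => (1 : ℝ)) y * (α y)⁻¹ with hwdef
      have hwmeas : Measurable w := (measurable_const.indicator hB).mul hαmeas.inv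
      have hwC : ∀ᵐ y ∂(P.map Y), |w y| ≤ C := by
        filter_upwards [hYae] with y hy
        have h1 : (α y)⁻¹ ≤ C := hinvle y hy.1 hy.2
        have h2 : 0 < (α y)⁻¹ := inv_pos.mpr (hαposy y hy.1 hy.2)
        have hind : |B.indicator (fun _ => (1 : ℝ)) y| ≤ 1 := by
          rw [Set.indicator_apply]; split_ifs <;> simp
        have hH : |w y| = |B.indicator (fun _ => (1 : ℝ)) y| * |(α y)⁻¹| := abs_mul _ _
        rw [hH]
        calc |B.indicator (fun _ => (1 : ℝ)) y| * |(α y)⁻¹|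
            ≤ 1 * C := mul_le_mul hind (by rwa [abs_of_pos h2]) (abs_nonneg _) one_pos.le
          _ = C := one_mul C
      have hLHS : ∫ ω in Y ⁻¹' B, f ω ∂P
          = ∫ ω, w (Y ω) * (Set.Iic (g (Y ω))).indicator (fun _ => (1 : ℝ)) (U ω) ∂P := by
        rw [← integral_indicator (hYmeas hB)]
        refine integral_congr_ae (Filter.Eventually.of_forall fun ω => ?_)
        show (Y ⁻¹' B).indicator f ω
          = (B.indicator (fun _ => (1 : ℝ)) (Y ω) * (α (Y ω))⁻¹)
            * (Set.Iic (g (Y ω))).indicator (fun _ => (1 : ℝ)) (U ω)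
        by_cases hB' : Y ω ∈ B
        · rw [Set.indicator_of_mem (show ω ∈ Y ⁻¹' B from hB'),
            Set.indicator_of_mem hB', one_mul]
          show (α (Y ω))⁻¹ * A.indicator (fun _ => (1 : ℝ)) ω = _
          by_cases hU' : U ω ≤ g (Y ω)
          · rw [Set.indicator_of_mem (show ω ∈ A from hU'),
              Set.indicator_of_mem (Set.mem_Iic.mpr hU')]
          · rw [Set.indicator_of_notMem (show ω ∉ A from hU'),
              Set.indicator_of_notMem (fun hc => hU' (Set.mem_Iic.mp hc))]
        · rw [Set.indicator_of_notMem (show ω ∉ Y ⁻¹' B from hB'),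
            Set.indicator_of_notMem hB', zero_mul, zero_mul]
      have hRHS : ∫ y, w y * g y ∂(P.map Y) = ∫ ω in Y ⁻¹' B, Y ω ∂P := by
        have h1 : ∫ y, w y * g y ∂(P.map Y)
            = ∫ y, B.indicator (fun y => y) y ∂(P.map Y) := by
          refine integral_congr_ae ?_
          filter_upwards [hYae] with y hy
          have hαy : α y ≠ 0 := (hαposy y hy.1 hy.2).ne'
          show (B.indicator (fun _ => (1 : ℝ)) y * (α y)⁻¹) * (α y * y)
            = B.indicator (fun y => y) y
          by_cases hB' : y ∈ B
          · rw [Set.indicator_of_mem hB', Set.indicator_of_mem hB', one_mul]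
            field_simp
          · rw [Set.indicator_of_notMem hB', Set.indicator_of_notMem hB',
              zero_mul, zero_mul]
        have h2 : ∫ y in B, y ∂(P.map Y) = ∫ ω in Y ⁻¹' B, Y ω ∂P :=
          setIntegral_map hB aestronglyMeasurable_id hYmeas.aemeasurable
        rw [h1, integral_indicator hB]
        exact h2
      rw [hLHS, key_integral P Y U hYmeas hU hUlaw hmap g w hgmeas hwmeas C hg01 hwC, hRHS]
    exact (ae_eq_condExp_of_forall_setIntegral_eq hm hfint
      (fun s _ _ => hYint'.integrableOn) hkey hYsm).symm
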